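/- arXiv:1808.03541 — 2 statements merged into one kernel-verified Lean document; each statement's English description precedes it below -/
import Mathlib

section
/- Let (C, F) be a Galois category and let X be a Galois object of C, i.e., a connected object with |Aut(X)| = |F(X)|. Then the quotient X/Aut(X), defined as the colimit (coequalizer) of the family of arrows σ : X → X for σ ∈ Aut(X), is a terminal object of C. -/
open CategoryTheory PreGaloisCategory Limits

universe u₁ u₂ w

theorem quotient_of_galois_object_is_terminal
    {C : Type u₁} [Category.{u₂} C] [GaloisCategory C]
    (F : C ⥤ FintypeCat.{w}) [FiberFunctor F]
    (X : C) [IsConnected X] (hcard : Nat.card (Aut X) = Nat.card (F.obj X)) :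
    Nonempty (IsTerminal (colimit (SingleObj.functor (Aut.toEnd X)))) := by
  rw [← isGalois_iff_aux X, isGalois_iff_pretransitive F X]
  obtain ⟨a⟩ := nonempty_fiber_of_isConnected F X
  have hinj := evaluation_aut_injective_of_isConnected F X a
  have hbij : Function.Bijective (fun σ : Aut X => F.map σ.hom a) := by
    rw [Nat.bijective_iff_injective_and_card]
    exact ⟨hinj, hcard⟩
  constructor
  intro x y
  obtain ⟨σ, hσ⟩ := hbij.surjective x
  obtain ⟨τ, hτ⟩ := hbij.surjective y
  exact ⟨τ * σ⁻¹, by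
    have : (τ * σ⁻¹) • x = F.map (σ⁻¹.hom ≫ τ.hom) x := rfl
    rw [this, F.map_comp, FintypeCat.comp_apply, ← hσ]
    simp only [← FintypeCat.comp_apply, ← F.map_comp]
    show F.map ((σ.hom ≫ σ.inv) ≫ τ.hom) a = y
    rw [show (σ.hom ≫ σ.inv) = 𝟙 X from Iso.hom_inv_id (σ : X ≅ X), Category.id_comp]
    exact hτ⟩
end

section
/- Let G be a (discrete) group. The category of finite G-sets (finite sets with a G-action, with G-equivariant maps), equipped with the forgetful functor F to finite sets, is a Galois category, and its fundamental group Aut(F) is isomorphic, as a profinite group, to the profinite completion of G, i.e., to the inverse limit of the finite quotients G/N taken over all normal subgroups N of G of finite index. -/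
/-!
STATEMENT 2: For a (discrete) group `G`, the category of finite `G`-sets with the
forgetful functor `F` to finite sets is a Galois category, and its fundamental group
`Aut F` is isomorphic, as a profinite (topological) group, to the profinite completion
of `G`, i.e. the inverse limit of the finite quotients `G/N` over all normal subgroups
`N` of `G` of finite index.
-/

open CategoryTheory PreGaloisCategory

universe u

/-- The index type of normal subgroups of finite index of a group `G`. -/
structure NormalFiniteIndexSubgroup (G : Type*) [Group G] where
  /-- the underlying subgroup -/
  N : Subgroup G
  [normal : N.Normal]
  [finiteIndex : N.FiniteIndex]

attribute [instance] NormalFiniteIndexSubgroup.normal NormalFiniteIndexSubgroup.finiteIndex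

/-- The profinite completion of a group `G`: the inverse limit of the finite quotients
`G/N` over all normal subgroups `N` of finite index in `G`, realized as the subgroup of
compatible families in the product of all these quotients. -/
def ProfiniteCompletion (G : Type*) [Group G] :
    Subgroup (∀ i : NormalFiniteIndexSubgroup G, G ⧸ i.N) where
  carrier := {f | ∀ (i j : NormalFiniteIndexSubgroup G) (h : i.N ≤ j.N),
    QuotientGroup.map i.N j.N (MonoidHom.id G)
      (h.trans (le_of_eq (Subgroup.comap_id j.N).symm)) (f i) = f j}
  one_mem' := by
    intro i j h
    simp
  mul_mem' := by
    intro f g hf hg i j h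
    simp only [Pi.mul_apply, map_mul, hf i j h, hg i j h]
  inv_mem' := by
    intro f hf i j h
    simp only [Pi.inv_apply, map_inv, hf i j h]

/-- Each quotient `G/N` carries the discrete topology (the quotient of a discrete group
is discrete). -/
instance (priority := 900) instTopQuotientDiscrete {G : Type*} [Group G] (N : Subgroup G) :
    TopologicalSpace (G ⧸ N) := ⊥

instance {G : Type*} [Group G] (N : Subgroup G) : DiscreteTopology (G ⧸ N) := ⟨rfl⟩



namespace ProfComplAux

variable {G : Type u} [Group G]

instance (N : Subgroup G) [N.Normal] : IsTopologicalGroup (G ⧸ N) where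
  continuous_mul := continuous_of_discreteTopology
  continuous_inv := continuous_of_discreteTopology

/-- The kernel of the permutation representation of `G` on a finite `G`-set. -/
def actionKer (X : Action FintypeCat.{u} (MonCat.of G)) : Subgroup G :=
  MonoidHom.ker (MulAction.toPermHom G X.V)

instance (X : Action FintypeCat.{u} (MonCat.of G)) : (actionKer X).Normal :=
  MonoidHom.normal_ker _

instance (X : Action FintypeCat.{u} (MonCat.of G)) : (actionKer X).FiniteIndex := by
  have : Finite (G ⧸ actionKer X) :=
    Finite.of_equiv (MulAction.toPermHom G X.V).range
      (QuotientGroup.quotientKerEquivRange (MulAction.toPermHom G X.V)).symm.toEquiv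
  exact Subgroup.finiteIndex_of_finite_quotient

/-- The index of a finite `G`-set. -/
def idx (X : Action FintypeCat.{u} (MonCat.of G)) : NormalFiniteIndexSubgroup G :=
  ⟨actionKer X⟩

lemma compat (f : ProfiniteCompletion G) {i j : NormalFiniteIndexSubgroup G}
    (h : i.N ≤ j.N) {g : G} (hg : f.1 i = QuotientGroup.mk g) :
    f.1 j = QuotientGroup.mk g := by
  have := f.2 i j h
  rw [hg, QuotientGroup.map_mk] at this
  exact this.symm ▸ rfl

lemma exists_mk (f : ProfiniteCompletion G) (i : NormalFiniteIndexSubgroup G) :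
    ∃ g : G, f.1 i = QuotientGroup.mk g := by
  obtain ⟨g, hg⟩ := QuotientGroup.mk_surjective (f.1 i)
  exact ⟨g, hg.symm⟩

instance mulActionK (X : Action FintypeCat.{u} (MonCat.of G)) :
    MulAction (ProfiniteCompletion G) X.V where
  smul f x := QuotientGroup.kerLift (MulAction.toPermHom G X.V) (f.1 (idx X)) x
  one_smul x := by
    show QuotientGroup.kerLift (MulAction.toPermHom G X.V) ((1 : ProfiniteCompletion G).1 (idx X)) x = x
    rw [show ((1 : ProfiniteCompletion G).1 (idx X)) = 1 from rfl]
    erw [map_one]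
    rfl
  mul_smul f g x := by
    show QuotientGroup.kerLift (MulAction.toPermHom G X.V) ((f * g).1 (idx X)) x = _
    rw [show ((f * g).1 (idx X)) = f.1 (idx X) * g.1 (idx X) from rfl]
    erw [map_mul]
    rfl

lemma smul_def (X : Action FintypeCat.{u} (MonCat.of G)) (f : ProfiniteCompletion G) (x : X.V) :
    f • x = QuotientGroup.kerLift (MulAction.toPermHom G X.V) (f.1 (idx X)) x := rfl

lemma smul_eq_of_mk {X : Action FintypeCat.{u} (MonCat.of G)} (f : ProfiniteCompletion G)
    {g : G} (h : f.1 (idx X) = QuotientGroup.mk g) (x : X.V) :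
    f • x = g • x := by
  rw [smul_def, h]
  erw [QuotientGroup.kerLift_mk]
  rfl

/-- diagonal embedding -/
def diag (g : G) : ProfiniteCompletion G :=
  ⟨fun i => QuotientGroup.mk g, by
    intro i j h
    rw [QuotientGroup.map_mk]
    rfl⟩

lemma diag_smul (X : Action FintypeCat.{u} (MonCat.of G)) (g : G) (x : X.V) :
    diag g • x = g • x :=
  smul_eq_of_mk _ rfl x

end ProfComplAux

namespace ProfComplAux

variable {G : Type u} [Group G]

lemma hom_smul {X Y : Action FintypeCat.{u} (MonCat.of G)} (u : X ⟶ Y) (g : G) (x : X.V) :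
    u.hom (g • x) = g • u.hom x := by
  show u.hom ((X.ρ g).hom x) = (Y.ρ g).hom (u.hom x)
  have := congrArg (fun (h : X.V ⟶ Y.V) => h x) (u.comm g)
  simpa using this

lemma naturalityK {X Y : Action FintypeCat.{u} (MonCat.of G)} (u : X ⟶ Y)
    (f : ProfiniteCompletion G) (x : X.V) : u.hom (f • x) = f • u.hom x := by
  let i : NormalFiniteIndexSubgroup G := ⟨(idx X).N ⊓ (idx Y).N⟩
  obtain ⟨g, hg⟩ := exists_mk f i
  rw [smul_eq_of_mk f (compat f (inf_le_left (b := (idx Y).N)) hg) x,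
      smul_eq_of_mk f (compat f (inf_le_right (a := (idx X).N)) hg) (u.hom x)]
  exact hom_smul u g x

instance : CompactSpace (ProfiniteCompletion G) := by
  have hc : IsClosed ((ProfiniteCompletion G : Set (∀ i : NormalFiniteIndexSubgroup G, G ⧸ i.N))) := by
    have heq : (ProfiniteCompletion G : Set (∀ i : NormalFiniteIndexSubgroup G, G ⧸ i.N)) =
        ⋂ (i : NormalFiniteIndexSubgroup G) (j : NormalFiniteIndexSubgroup G) (h : i.N ≤ j.N),
          {f : ∀ i : NormalFiniteIndexSubgroup G, G ⧸ i.N |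
            QuotientGroup.map i.N j.N (MonoidHom.id G)
              (h.trans (le_of_eq (Subgroup.comap_id j.N).symm)) (f i) = f j} := by
      ext f
      simp only [SetLike.mem_coe, Set.mem_iInter, Set.mem_setOf_eq]
      exact Iff.rfl
    rw [heq]
    refine isClosed_iInter fun i => isClosed_iInter fun j => isClosed_iInter fun h => ?_
    exact isClosed_eq (continuous_of_discreteTopology.comp (continuous_apply i))
      (continuous_apply j)
  exact isCompact_iff_compactSpace.mp hc.isCompact

end ProfComplAux

namespace ProfComplAux

variable {G : Type u} [Group G]

/-- The finite `G`-set `G ⧸ N` for a normal finite index subgroup. -/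
noncomputable def XQ (i : NormalFiniteIndexSubgroup G) : Action FintypeCat.{u} (MonCat.of G) :=
  letI : Fintype (G ⧸ i.N) := Fintype.ofFinite _
  Action.FintypeCat.ofMulAction G (FintypeCat.of (G ⧸ i.N))

lemma xq_smul (i : NormalFiniteIndexSubgroup G) (b : G) :
    (b • (show (XQ i).V from (QuotientGroup.mk (1 : G) : G ⧸ i.N))) = (show (XQ i).V from (QuotientGroup.mk b : G ⧸ i.N)) := by
  letI : Fintype (G ⧸ i.N) := Fintype.ofFinite _
  have hbr : (b • (show (XQ i).V from (QuotientGroup.mk (1 : G) : G ⧸ i.N))) = b • (QuotientGroup.mk (1 : G) : G ⧸ i.N) := rfl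
  rw [hbr, MulAction.Quotient.smul_mk]
  show (QuotientGroup.mk (b * 1) : G ⧸ i.N) = QuotientGroup.mk b
  rw [mul_one]

lemma eq_one_of_trivial (f : ProfiniteCompletion G)
    (h : ∀ (X : Action FintypeCat.{u} (MonCat.of G)) (x : X.V), f • x = x) : f = 1 := by
  apply Subtype.ext
  funext i
  obtain ⟨g, hg⟩ := exists_mk f (idx (XQ i))
  have h1 : f • (show (XQ i).V from (QuotientGroup.mk (1 : G) : G ⧸ i.N)) = (QuotientGroup.mk (1 : G) : G ⧸ i.N) := h (XQ i) _
  rw [smul_eq_of_mk f hg, xq_smul i g] at h1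
  have hgN : g ∈ i.N := by
    apply (QuotientGroup.eq_one_iff (N := i.N) g).mp
    exact h1
  have hker : (idx (XQ i)).N ≤ i.N := by
    intro a ha
    have ha' : MulAction.toPermHom G (XQ i).V a = 1 := ha
    have h3 : a • (show (XQ i).V from (QuotientGroup.mk (1 : G) : G ⧸ i.N)) = (QuotientGroup.mk (1 : G) : G ⧸ i.N) := by
      have := congrArg
        (fun (e : Equiv.Perm (XQ i).V) => e (show (XQ i).V from (QuotientGroup.mk (1 : G) : G ⧸ i.N))) ha'
      exact this
    rw [xq_smul i a] at h3
    exact (QuotientGroup.eq_one_iff (N := i.N) a).mp h3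
  show f.1 i = 1
  rw [compat f hker hg]
  exact (QuotientGroup.eq_one_iff g).mpr hgN

end ProfComplAux

namespace ProfComplAux

variable (G : Type u) [Group G]

instance instMulActionGF (X : Action FintypeCat.{u} (MonCat.of G)) :
    MulAction G ((Action.forget FintypeCat.{u} (MonCat.of G)).obj X) :=
  inferInstanceAs (MulAction G X.V)

instance instMulActionKF (X : Action FintypeCat.{u} (MonCat.of G)) :
    MulAction (ProfiniteCompletion G) ((Action.forget FintypeCat.{u} (MonCat.of G)).obj X) :=
  mulActionK X

instance : IsFundamentalGroup (Action.forget FintypeCat.{u} (MonCat.of G))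
    (ProfiniteCompletion G) where
  naturality k {X Y} f x := naturalityK f k x
  transitive_of_isGalois X := by
    intro _
    haveI : MulAction.IsPretransitive G
        ((Action.forget FintypeCat.{u} (MonCat.of G)).obj X) :=
      CategoryTheory.FintypeCat.Action.pretransitive_of_isConnected G X
    constructor
    intro x y
    obtain ⟨g, hg⟩ := MulAction.exists_smul_eq G x y
    exact ⟨diag g, (diag_smul X g x).trans hg⟩
  continuous_smul X := by
    constructor
    haveI : DiscreteTopology ((Action.forget FintypeCat.{u} (MonCat.of G)).obj X) := ⟨rfl⟩
    have hπ : Continuous (fun p : ProfiniteCompletion G ×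
        (Action.forget FintypeCat.{u} (MonCat.of G)).obj X => ((p.1.1 (idx X), p.2) :
          (G ⧸ (idx X).N) × (Action.forget FintypeCat.{u} (MonCat.of G)).obj X)) :=
      ((continuous_apply (idx X)).comp (continuous_subtype_val.comp continuous_fst)).prodMk
        continuous_snd
    have heq : (fun p : ProfiniteCompletion G ×
          (Action.forget FintypeCat.{u} (MonCat.of G)).obj X => p.1 • p.2) =
        (fun q : (G ⧸ (idx X).N) × (Action.forget FintypeCat.{u} (MonCat.of G)).obj X =>
          QuotientGroup.kerLift (MulAction.toPermHom G X.V) q.1 q.2) ∘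
        (fun p => (p.1.1 (idx X), p.2)) := rfl
    rw [heq]
    exact continuous_of_discreteTopology.comp hπ
  non_trivial' f h := eq_one_of_trivial f h

end ProfComplAux


open ProfComplAux in
/-- The category of finite `G`-sets, together with the forgetful functor to finite sets,
is a Galois category whose fundamental group is the profinite completion of `G`. -/
theorem finite_G_sets_galois_category_with_fundamental_group_profinite_completion
    (G : Type u) [Group G] :
    PreGaloisCategory (Action FintypeCat.{u} (MonCat.of G)) ∧
    Nonempty (FiberFunctor (Action.forget FintypeCat.{u} (MonCat.of G))) ∧
    ∃ e : Aut (Action.forget FintypeCat.{u} (MonCat.of G)) ≃* ProfiniteCompletion G,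
      Continuous e ∧ Continuous e.symm := by
  
  refine ⟨inferInstance, ⟨inferInstance⟩, ?_⟩
  have hh := toAutMulEquiv_isHomeomorph (Action.forget FintypeCat.{u} (MonCat.of G))
    (ProfiniteCompletion G)
  set μ := toAutMulEquiv (Action.forget FintypeCat.{u} (MonCat.of G)) (ProfiniteCompletion G)
  let homeo := Equiv.toHomeomorphOfContinuousOpen μ.toEquiv hh.continuous hh.isOpenMap
  exact ⟨μ.symm, homeo.symm.continuous, homeo.continuous⟩
end
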